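/- Assume: φ ∈ C([0,∞)) ∩ C¹((0,∞)) with φ(0) = 0 and φ' > 0 on (0,∞); l ∈ C([0,∞)) with l > 0 on (0,∞); s ↦ s·φ'(s)/l(s) is integrable on (0,1) but not integrable on (1,∞), so that K(t) = ∫₀^t s·φ'(s)/l(s) ds is an increasing bijection of [0,∞) onto itself. Let η̄₀ ≥ 0, let f ∈ C(ℝ) be positive and C-increasing on (η̄₀,∞) for some C ≥ 1, and set F(t) = ∫_{η̄₀}^t f(s) ds. Then for every σ > 0 the following are equivalent: (a) the function s ↦ 1/K⁻¹(F(s)) is integrable on (T,∞) for some T > η̄₀; (b) the function s ↦ 1/K⁻¹(σ·F(s)) is integrable on (T,∞) for some T > η̄₀. -/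

import Mathlib

open Set MeasureTheory

/-- Given `C ≥ 1`, a function `h` is `C`-increasing on `I` if
`sup {h s : s ∈ I, s ≤ t} ≤ C * h t` for every `t ∈ I`. -/
def CIncreasingOn (C : ℝ) (h : ℝ → ℝ) (I : Set ℝ) : Prop :=
  ∀ s ∈ I, ∀ t ∈ I, s ≤ t → h s ≤ C * h t

/-- Key one-directional lemma: if `1/Kinv ∘ F` is integrable near `+∞`, then so is
`1/Kinv ∘ (σ F)`, assuming `Kinv` is monotone on `[0,∞)` and positive on `(0,∞)`
and `f` is positive, continuous, `C`-increasing. -/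
lemma aux_scale (ηb₀ C : ℝ) (hηb₀ : 0 ≤ ηb₀) (hC : 1 ≤ C)
    (f : ℝ → ℝ) (hfc : Continuous f) (hfpos : ∀ t : ℝ, ηb₀ < t → 0 < f t)
    (hfCinc : CIncreasingOn C f (Ioi ηb₀))
    (F : ℝ → ℝ) (hF : ∀ t, F t = ∫ s in ηb₀..t, f s)
    (Kinv : ℝ → ℝ)
    (hKmono : ∀ y₁ y₂ : ℝ, 0 ≤ y₁ → y₁ ≤ y₂ → Kinv y₁ ≤ Kinv y₂)
    (hKpos : ∀ y : ℝ, 0 < y → 0 < Kinv y)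
    (σ : ℝ) (hσ : 0 < σ)
    (T : ℝ) (hT : ηb₀ < T)
    (hint : IntegrableOn (fun s => 1 / Kinv (F s)) (Ioi T)) :
    ∃ T' : ℝ, ηb₀ < T' ∧ IntegrableOn (fun s => 1 / Kinv (σ * F s)) (Ioi T') := by
  have hC0 : (0:ℝ) < C := lt_of_lt_of_le one_pos hC
  set lam : ℝ := max 1 (1 + C ^ 2 * (σ⁻¹ - 1)) with hlamdef
  have hlam1 : (1:ℝ) ≤ lam := le_max_left _ _
  have hlam0 : (0:ℝ) < lam := lt_of_lt_of_le one_pos hlam1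
  have hlamge : 1 + C ^ 2 * (σ⁻¹ - 1) ≤ lam := le_max_right _ _
  -- key algebraic inequality without inverses
  have hlamkey2 : C ^ 2 ≤ σ * (C ^ 2 + lam - 1) := by
    have h1 : C ^ 2 + C ^ 2 * (σ⁻¹ - 1) ≤ C ^ 2 + (lam - 1) := by linarith
    calc C ^ 2 = σ * (C ^ 2 * σ⁻¹) := by field_simp
      _ = σ * (C ^ 2 + C ^ 2 * (σ⁻¹ - 1)) := by ring
      _ ≤ σ * (C ^ 2 + (lam - 1)) := mul_le_mul_of_nonneg_left h1 hσ.le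
      _ = σ * (C ^ 2 + lam - 1) := by ring
  have hfint : ∀ a b : ℝ, IntervalIntegrable f volume a b := fun a b =>
    hfc.intervalIntegrable a b
  have hFpos : ∀ t : ℝ, ηb₀ < t → 0 < F t := by
    intro t ht
    rw [hF]
    exact intervalIntegral.intervalIntegral_pos_of_pos_on (hfint ηb₀ t)
      (fun x hx => hfpos x hx.1) ht
  -- the key comparison: F t ≤ σ * F (lam * t) for t ≥ T
  have key : ∀ t : ℝ, T ≤ t → F t ≤ σ * F (lam * t) := by
    intro t ht
    have htη : ηb₀ < t := hT.trans_le ht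
    have ht0 : 0 < t := lt_of_le_of_lt hηb₀ htη
    have hlt : t ≤ lam * t := le_mul_of_one_le_left ht0.le hlam1
    have hft : 0 < f t := hfpos t htη
    have hFt : 0 < F t := hFpos t htη
    have hsplit : F (lam * t) = F t + ∫ s in Ioc t (lam * t), f s := by
      rw [hF, hF, ← intervalIntegral.integral_add_adjacent_intervals (hfint ηb₀ t)
        (hfint t (lam * t)), intervalIntegral.integral_of_le hlt]
    set I : ℝ := ∫ s in Ioc t (lam * t), f s with hI
    have hconst : ∀ a b c : ℝ, a ≤ b → ∫ _ in Ioc a b, c = (b - a) * c := by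
      intro a b c hab
      rw [setIntegral_const, Real.volume_real_Ioc_of_le hab, smul_eq_mul]
    have hIpos : 0 ≤ I := by
      refine setIntegral_nonneg measurableSet_Ioc fun x hx => ?_
      exact (hfpos x (htη.trans hx.1)).le
    have hlow : (lam * t - t) * f t ≤ C * I := by
      have h1 : ∫ _ in Ioc t (lam * t), f t ≤ ∫ s in Ioc t (lam * t), C * f s := by
        refine setIntegral_mono_on
          (integrableOn_const measure_Ioc_lt_top.ne)
          ((continuous_const.mul hfc).intervalIntegrable t (lam * t)).1
          measurableSet_Ioc (fun x hx => ?_)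
        exact hfCinc t htη x (htη.trans hx.1) hx.1.le
      rw [hconst t (lam * t) (f t) hlt, integral_const_mul] at h1
      exact h1
    have hup : F t ≤ (t - ηb₀) * (C * f t) := by
      rw [hF, intervalIntegral.integral_of_le htη.le]
      have h1 : ∫ s in Ioc ηb₀ t, f s ≤ ∫ _ in Ioc ηb₀ t, C * f t := by
        refine setIntegral_mono_on (hfint ηb₀ t).1
          (integrableOn_const measure_Ioc_lt_top.ne)
          measurableSet_Ioc (fun x hx => ?_)
        exact hfCinc x hx.1 t htη hx.2
      rwa [hconst ηb₀ t (C * f t) htη.le] at h1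
    rw [hsplit]
    nlinarith [mul_le_mul_of_nonneg_right hlamkey2 hFt.le,
      mul_le_mul_of_nonneg_left hup (mul_nonneg hσ.le (sub_nonneg.2 hlam1)),
      mul_le_mul_of_nonneg_left hlow (mul_nonneg hσ.le hC0.le),
      mul_nonneg (mul_nonneg (mul_nonneg (mul_nonneg hσ.le (sub_nonneg.2 hlam1)) hηb₀)
        hC0.le) hft.le,
      pow_pos hC0 2, mul_nonneg hσ.le hIpos]
  -- now the integrability transfer
  have hT0 : 0 < T := lt_of_le_of_lt hηb₀ hT
  refine ⟨lam * T, hT.trans_le (le_mul_of_one_le_left hT0.le hlam1), ?_⟩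
  -- majorant
  have hmaj : IntegrableOn (fun s => 1 / Kinv (F (lam⁻¹ * s))) (Ioi (lam * T)) := by
    have := (integrableOn_Ioi_comp_mul_left_iff (fun u => 1 / Kinv (F u)) (lam * T)
      (inv_pos.2 hlam0)).2
    rw [inv_mul_cancel_left₀ hlam0.ne'] at this
    exact this hint
  -- monotone extension of Kinv for measurability
  set h : ℝ → ℝ := fun y => Kinv (max y 0) with hh
  have hmono : Monotone h := fun y₁ y₂ hy =>
    hKmono _ _ (le_max_right _ _) (max_le_max hy le_rfl)
  have hFcont : Continuous F := by
    have : F = fun t => ∫ s in ηb₀..t, f s := funext hF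
    rw [this]
    exact intervalIntegral.continuous_primitive hfint ηb₀
  have hmeas : Measurable fun s => 1 / h (σ * F s) := by
    simp only [one_div]
    exact (hmono.measurable.comp ((continuous_const.mul hFcont).measurable)).inv
  have hbound : ∀ s ∈ Ioi (lam * T),
      ‖1 / h (σ * F s)‖ ≤ ‖1 / Kinv (F (lam⁻¹ * s))‖ := by
    intro s hs
    have hu : T < lam⁻¹ * s := by
      have := (mul_lt_mul_iff_right₀ (inv_pos.2 hlam0)).2 hs
      rwa [inv_mul_cancel_left₀ hlam0.ne'] at this
    have huη : ηb₀ < lam⁻¹ * s := hT.trans hu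
    have hFu : 0 < F (lam⁻¹ * s) := hFpos _ huη
    have hkey : F (lam⁻¹ * s) ≤ σ * F s := by
      have := key (lam⁻¹ * s) hu.le
      rwa [mul_inv_cancel_left₀ hlam0.ne'] at this
    have hσFs : 0 < σ * F s := lt_of_lt_of_le hFu hkey
    have hmax : h (σ * F s) = Kinv (σ * F s) := by
      rw [hh]; simp [max_eq_left hσFs.le]
    have hKle : Kinv (F (lam⁻¹ * s)) ≤ Kinv (σ * F s) := hKmono _ _ hFu.le hkey
    have hKu : 0 < Kinv (F (lam⁻¹ * s)) := hKpos _ hFu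
    have hKs : 0 < Kinv (σ * F s) := hKpos _ hσFs
    rw [hmax, Real.norm_eq_abs, Real.norm_eq_abs,
      abs_of_pos (by positivity), abs_of_pos (by positivity)]
    exact one_div_le_one_div_of_le hKu hKle
  have hint' : IntegrableOn (fun s => 1 / h (σ * F s)) (Ioi (lam * T)) := by
    refine Integrable.mono hmaj hmeas.aestronglyMeasurable.restrict ?_
    exact (ae_restrict_iff' measurableSet_Ioi).2 (Filter.Eventually.of_forall hbound)
  refine hint'.congr_fun (fun s hs => ?_) measurableSet_Ioi
  have hsT : T < s := lt_of_le_of_lt (le_mul_of_one_le_left hT0.le hlam1) hs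
  have hFs : 0 < F s := hFpos s (hT.trans hsT)
  have : h (σ * F s) = Kinv (σ * F s) := by
    rw [hh]; simp [max_eq_left (mul_pos hσ hFs).le]
  simp only [this]

theorem stmt_4
    (φ φ' l : ℝ → ℝ)
    (hφc : ContinuousOn φ (Ici 0)) (hφ0 : φ 0 = 0)
    (hφd : ∀ t : ℝ, 0 < t → HasDerivAt φ (φ' t) t)
    (hφ'c : ContinuousOn φ' (Ioi 0))
    (hφ'pos : ∀ t : ℝ, 0 < t → 0 < φ' t)
    (hlc : ContinuousOn l (Ici 0)) (hlpos : ∀ t : ℝ, 0 < t → 0 < l t)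
    (hint0 : IntegrableOn (fun s => s * φ' s / l s) (Ioo 0 1))
    (hintinf : ¬ IntegrableOn (fun s => s * φ' s / l s) (Ioi 1))
    (C ηb₀ : ℝ) (hC : 1 ≤ C) (hηb₀ : 0 ≤ ηb₀)
    (f : ℝ → ℝ) (hfc : Continuous f)
    (hfpos : ∀ t : ℝ, ηb₀ < t → 0 < f t)
    (hfCinc : CIncreasingOn C f (Ioi ηb₀))
    (F K Kinv : ℝ → ℝ)
    (hF : ∀ t, F t = ∫ s in ηb₀..t, f s)
    (hK : ∀ t, K t = ∫ s in (0:ℝ)..t, s * φ' s / l s)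
    (hKinv : ∀ t : ℝ, 0 ≤ t → Kinv (K t) = t)
    (σ : ℝ) (hσ : 0 < σ) :
    (∃ T : ℝ, ηb₀ < T ∧ IntegrableOn (fun s => 1 / Kinv (F s)) (Ioi T)) ↔
      (∃ T : ℝ, ηb₀ < T ∧ IntegrableOn (fun s => 1 / Kinv (σ * F s)) (Ioi T)) := by
  set g : ℝ → ℝ := fun s => s * φ' s / l s with hg
  -- integrability of g on Ioc 0 b
  have hgc : ContinuousOn g (Ioi 0) := by
    refine (continuousOn_id.mul hφ'c).div (hlc.mono fun x hx => mem_Ici.2 (le_of_lt hx)) ?_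
    exact fun x hx => (hlpos x hx).ne'
  have hint01 : IntegrableOn g (Ioc 0 1) := (integrableOn_Ioc_iff_integrableOn_Ioo (f := g) (by simp)).2 hint0
  have hgint : ∀ b : ℝ, IntegrableOn g (Ioc 0 b) := by
    intro b
    rcases le_or_gt b 1 with hb | hb
    · exact hint01.mono_set (Ioc_subset_Ioc_right hb)
    · have h2 : IntegrableOn g (Ioc 1 b) := by
        refine (hgc.mono ?_).integrableOn_Icc.mono_set Ioc_subset_Icc_self
        intro x hx
        exact lt_of_lt_of_le one_pos hx.1
      have : Ioc 0 1 ∪ Ioc 1 b = Ioc 0 b := Ioc_union_Ioc_eq_Ioc zero_le_one hb.le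
      rw [← this]
      exact hint01.union h2
  have hgpos : ∀ x : ℝ, 0 < x → 0 < g x := fun x hx =>
    div_pos (mul_pos hx (hφ'pos x hx)) (hlpos x hx)
  have hgii : ∀ a b : ℝ, 0 ≤ a → a ≤ b → IntervalIntegrable g volume a b := by
    intro a b ha hab
    rw [intervalIntegrable_iff_integrableOn_Ioc_of_le hab]
    exact (hgint b).mono_set (Ioc_subset_Ioc_left ha)
  have hK0 : K 0 = 0 := by rw [hK]; simp
  -- K is strictly monotone on [0,∞)
  have hKsm : ∀ a b : ℝ, 0 ≤ a → a < b → K a < K b := by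
    intro a b ha hab
    have h1 : IntervalIntegrable g volume 0 a := hgii 0 a le_rfl ha
    have h2 : IntervalIntegrable g volume a b := hgii a b ha hab.le
    have hsplit : K b = K a + ∫ x in a..b, g x := by
      rw [hK, hK, intervalIntegral.integral_add_adjacent_intervals h1 h2]
    have hpos : 0 < ∫ x in a..b, g x :=
      intervalIntegral.intervalIntegral_pos_of_pos_on h2
        (fun x hx => hgpos x (lt_of_le_of_lt ha hx.1)) hab
    rw [hsplit]; linarith
  -- continuity of K on [0, b]
  have hKc : ∀ b : ℝ, 0 ≤ b → ContinuousOn K (Icc 0 b) := by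
    intro b hb
    have hi : IntegrableOn g (Icc 0 b) := (integrableOn_Icc_iff_integrableOn_Ioc (f := g) (by simp)).2 (hgint b)
    refine (intervalIntegral.continuousOn_primitive hi).congr fun t ht => ?_
    rw [hK, intervalIntegral.integral_of_le ht.1]
  -- K is unbounded above on [0,∞)
  have hunb : ∀ M : ℝ, ∃ t : ℝ, 0 ≤ t ∧ M ≤ K t := by
    by_contra hcon
    push_neg at hcon
    obtain ⟨M, hM⟩ := hcon
    apply hintinf
    refine integrableOn_Ioi_of_intervalIntegral_norm_bounded (M - K 1) 1
      (b := fun n : ℕ => 1 + (n : ℝ))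
      (fun n => (hgint (1 + n)).mono_set (Ioc_subset_Ioc_left zero_le_one))
      (Filter.tendsto_atTop_add_const_left _ _ tendsto_natCast_atTop_atTop) ?_
    refine Filter.Eventually.of_forall fun n => ?_
    have h1n : (1:ℝ) ≤ 1 + n := by simp [Nat.cast_nonneg]
    have heq : ∫ x in (1:ℝ)..(1 + n), ‖g x‖ = ∫ x in (1:ℝ)..(1 + n), g x := by
      refine intervalIntegral.integral_congr fun x hx => ?_
      rw [uIcc_of_le h1n] at hx
      exact Real.norm_of_nonneg (hgpos x (lt_of_lt_of_le one_pos hx.1)).le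
    have hsplit : K (1 + n) = K 1 + ∫ x in (1:ℝ)..(1 + n), g x := by
      rw [hK, hK, intervalIntegral.integral_add_adjacent_intervals
        (hgii 0 1 le_rfl zero_le_one) (hgii 1 (1 + n) zero_le_one h1n)]
    have := hM (1 + n) (by linarith)
    rw [heq]; linarith
  -- surjectivity of K onto [0,∞)
  have hsurj : ∀ y : ℝ, 0 ≤ y → ∃ t : ℝ, 0 ≤ t ∧ K t = y := by
    intro y hy
    obtain ⟨b, hb0, hby⟩ := hunb y
    have hmem : y ∈ Icc (K 0) (K b) := ⟨by rw [hK0]; exact hy, hby⟩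
    obtain ⟨t, ht, hKt⟩ := intermediate_value_Icc hb0 (hKc b hb0) hmem
    exact ⟨t, ht.1, hKt⟩
  -- monotonicity and positivity of Kinv on [0,∞)
  have hKmono : ∀ y₁ y₂ : ℝ, 0 ≤ y₁ → y₁ ≤ y₂ → Kinv y₁ ≤ Kinv y₂ := by
    intro y₁ y₂ h1 h12
    obtain ⟨t₁, ht₁, e₁⟩ := hsurj y₁ h1
    obtain ⟨t₂, ht₂, e₂⟩ := hsurj y₂ (h1.trans h12)
    rw [← e₁, ← e₂, hKinv t₁ ht₁, hKinv t₂ ht₂]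
    by_contra hlt
    push_neg at hlt
    have := hKsm t₂ t₁ ht₂ hlt
    rw [e₁, e₂] at this
    linarith
  have hKpos : ∀ y : ℝ, 0 < y → 0 < Kinv y := by
    intro y hy
    obtain ⟨t, ht, e⟩ := hsurj y hy.le
    rw [← e, hKinv t ht]
    rcases ht.lt_or_eq with h | h
    · exact h
    · exfalso; rw [← h, hK0] at e; linarith
  constructor
  · rintro ⟨T, hT, hi⟩
    exact aux_scale ηb₀ C hηb₀ hC f hfc hfpos hfCinc F hF Kinv hKmono hKpos σ hσ T hT hi
  · rintro ⟨T, hT, hi⟩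
    have hfc' : Continuous fun s => σ * f s := continuous_const.mul hfc
    have hfpos' : ∀ t : ℝ, ηb₀ < t → 0 < σ * f t := fun t ht => mul_pos hσ (hfpos t ht)
    have hfCinc' : CIncreasingOn C (fun s => σ * f s) (Ioi ηb₀) := by
      intro s hs t ht hst
      have := hfCinc s hs t ht hst
      calc σ * f s ≤ σ * (C * f t) := mul_le_mul_of_nonneg_left this hσ.le
        _ = C * (σ * f t) := by ring
    have hF' : ∀ t, σ * F t = ∫ s in ηb₀..t, σ * f s := by
      intro t
      rw [hF, intervalIntegral.integral_const_mul]
    obtain ⟨T', hT', hi'⟩ := aux_scale ηb₀ C hηb₀ hC (fun s => σ * f s) hfc' hfpos'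
      hfCinc' (fun t => σ * F t) hF' Kinv hKmono hKpos σ⁻¹ (inv_pos.2 hσ) T hT hi
    refine ⟨T', hT', ?_⟩
    simpa [inv_mul_cancel_left₀ hσ.ne'] using hi'
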